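/- There is a constant C > 0 such that for all ε ∈ (0,1], σ ≥ 0, and all m₁, m₂ ∈ ℝ, with k = (ε m₁, ε² m₂), the symbol Ŝ(m₁,m₂) = ε^{-4}(1 + ε² + σ|k|²)(1 + |k|²/3)|k|(tanh|k| - |k|/(1+|k|²/3)) satisfies Ŝ(m₁,m₂) ≤ C(1+σ) ε² (m₁² + ε² m₂²)³ whenever |k| ≤ 1. -/

import Mathlib

open Real

lemma cont_tanh : Continuous Real.tanh := by
  have : Real.tanh = fun x => Real.sinh x / Real.cosh x := funext Real.tanh_eq_sinh_div_cosh
  rw [this]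
  exact Real.continuous_sinh.div Real.continuous_cosh fun x => (Real.cosh_pos x).ne'

lemma tanh_nneg {x : ℝ} (hx : 0 ≤ x) : 0 ≤ Real.tanh x := by
  rw [Real.tanh_eq_sinh_div_cosh]
  exact div_nonneg ((Real.sinh_nonneg_iff.2 hx)) (Real.cosh_pos x).le

lemma hdtanh (x : ℝ) : HasDerivAt Real.tanh (1 - Real.tanh x ^ 2) x := by
  have h := (Real.hasDerivAt_sinh x).div (Real.hasDerivAt_cosh x) (Real.cosh_pos x).ne'
  have e : ∀ y, Real.tanh y = Real.sinh y / Real.cosh y := Real.tanh_eq_sinh_div_cosh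
  rw [show Real.sinh / Real.cosh = Real.tanh from funext fun y => (e y).symm] at h
  refine h.congr_deriv ?_
  have h2 := Real.cosh_sq_sub_sinh_sq x
  have := (Real.cosh_pos x).ne'
  rw [e]
  field_simp

lemma tanh_le_self' {x : ℝ} (hx : 0 ≤ x) : Real.tanh x ≤ x := by
  have hd : ∀ y : ℝ, HasDerivAt (fun t => t - Real.tanh t) (Real.tanh y ^ 2) y := by
    intro y
    have := (hasDerivAt_id y).sub (hdtanh y)
    exact this.congr_deriv (by ring)
  have mono : MonotoneOn (fun t => t - Real.tanh t) (Set.Ici (0:ℝ)) := by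
    apply monotoneOn_of_deriv_nonneg (convex_Ici 0)
    · exact (Continuous.sub continuous_id cont_tanh).continuousOn
    · intro y _; exact (hd y).differentiableAt.differentiableWithinAt
    · intro y _; rw [(hd y).deriv]; positivity
  have h0 := mono (Set.self_mem_Ici) (Set.mem_Ici.2 hx) hx
  simpa [Real.tanh_zero] using h0

lemma tanh_ge_cubic {x : ℝ} (hx : 0 ≤ x) : x - x ^ 3 / 3 ≤ Real.tanh x := by
  have hd : ∀ y : ℝ, HasDerivAt (fun t => Real.tanh t - (t - t ^ 3 / 3))
      (1 - Real.tanh y ^ 2 - (1 - y ^ 2)) y := by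
    intro y
    have h1 : HasDerivAt (fun t : ℝ => t - t ^ 3 / 3) (1 - y ^ 2) y := by
      have := (hasDerivAt_id y).sub (((hasDerivAt_pow 3 y)).div_const 3)
      exact this.congr_deriv (by ring)
    exact (hdtanh y).sub h1
  have mono : MonotoneOn (fun t => Real.tanh t - (t - t ^ 3 / 3)) (Set.Ici (0:ℝ)) := by
    apply monotoneOn_of_deriv_nonneg (convex_Ici 0)
    · exact (cont_tanh.sub (by continuity)).continuousOn
    · intro y _; exact (hd y).differentiableAt.differentiableWithinAt
    · intro y hy
      rw [(hd y).deriv]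
      rw [interior_Ici] at hy
      have hy' : 0 < y := hy
      have h1 : Real.tanh y ≤ y := tanh_le_self' hy'.le
      have h2 : 0 ≤ Real.tanh y := tanh_nneg hy'.le
      nlinarith
  have h0 := mono (Set.self_mem_Ici) (Set.mem_Ici.2 hx) hx
  simp only [Real.tanh_zero] at h0
  linarith [h0]

lemma tanh_le_quintic {x : ℝ} (hx : 0 ≤ x) (hx1 : x ≤ 1) :
    Real.tanh x ≤ x - x ^ 3 / 3 + 2 * x ^ 5 / 15 := by
  have hd : ∀ y : ℝ, HasDerivAt (fun t => (t - t ^ 3 / 3 + 2 * t ^ 5 / 15) - Real.tanh t)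
      ((1 - y ^ 2 + 2 * y ^ 4 / 3) - (1 - Real.tanh y ^ 2)) y := by
    intro y
    have h1 : HasDerivAt (fun t : ℝ => t - t ^ 3 / 3 + 2 * t ^ 5 / 15)
        (1 - y ^ 2 + 2 * y ^ 4 / 3) y := by
      have := ((hasDerivAt_id y).sub ((hasDerivAt_pow 3 y).div_const 3)).add
        (((hasDerivAt_pow 5 y).const_mul 2).div_const 15)
      exact this.congr_deriv (by ring)
    exact h1.sub (hdtanh y)
  have mono : MonotoneOn (fun t => (t - t ^ 3 / 3 + 2 * t ^ 5 / 15) - Real.tanh t)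
      (Set.Icc (0:ℝ) 1) := by
    apply monotoneOn_of_deriv_nonneg (convex_Icc 0 1)
    · exact ((by continuity : Continuous fun t : ℝ => t - t ^ 3 / 3 + 2 * t ^ 5 / 15).sub
        cont_tanh).continuousOn
    · intro y _; exact (hd y).differentiableAt.differentiableWithinAt
    · intro y hy
      rw [(hd y).deriv]
      rw [interior_Icc] at hy
      obtain ⟨hy0, hy1⟩ := hy
      have h1 : y - y ^ 3 / 3 ≤ Real.tanh y := tanh_ge_cubic hy0.le
      have hsq : y ^ 2 ≤ 1 := by nlinarith
      have h2 : 0 ≤ y - y ^ 3 / 3 := by nlinarith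
      have h3 := mul_le_mul h1 h1 h2 ((h2.trans h1).trans (le_refl _) |>.trans (le_refl _))
      nlinarith [mul_le_mul h1 h1 h2 (h2.trans h1), pow_nonneg hy0.le 6]
  have h0 := mono (Set.left_mem_Icc.2 one_pos.le) (Set.mem_Icc.2 ⟨hx, hx1⟩) hx
  simp only [Real.tanh_zero] at h0
  nlinarith [h0]

lemma key {x : ℝ} (hx : 0 ≤ x) (hx1 : x ≤ 1) :
    Real.tanh x - x / (1 + x ^ 2 / 3) ≤ 2 * x ^ 5 / 15 := by
  have h1 := tanh_le_quintic hx hx1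
  have h3 : (0:ℝ) < 1 + x ^ 2 / 3 := by positivity
  have h2 : x - x ^ 3 / 3 ≤ x / (1 + x ^ 2 / 3) := by
    rw [le_div_iff₀ h3]; nlinarith [pow_nonneg hx 5]
  linarith
theorem stmt_12 :
    ∃ C : ℝ, 0 < C ∧
      ∀ ε σ m₁ m₂ k : ℝ, 0 < ε → ε ≤ 1 → 0 ≤ σ →
        k = Real.sqrt (ε ^ 2 * m₁ ^ 2 + ε ^ 4 * m₂ ^ 2) → k ≤ 1 →
        (ε ^ 4)⁻¹ * ((1 + ε ^ 2 + σ * k ^ 2) * (1 + k ^ 2 / 3) * k *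
            (Real.tanh k - k / (1 + k ^ 2 / 3)))
          ≤ C * (1 + σ) * ε ^ 2 * (m₁ ^ 2 + ε ^ 2 * m₂ ^ 2) ^ 3 := by
  refine ⟨1, one_pos, fun ε σ m₁ m₂ k hε hε1 hσ hk hk1 => ?_⟩
  have hk0 : 0 ≤ k := hk ▸ Real.sqrt_nonneg _
  have hk2 : k ^ 2 = ε ^ 2 * m₁ ^ 2 + ε ^ 4 * m₂ ^ 2 := by
    rw [hk, Real.sq_sqrt (by positivity)]
  have hd := key hk0 hk1
  have hA : 0 ≤ (1 + ε ^ 2 + σ * k ^ 2) * (1 + k ^ 2 / 3) * k := by positivity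
  have hε4 : (0:ℝ) < ε ^ 4 := by positivity
  rw [inv_mul_le_iff₀ hε4]
  calc (1 + ε ^ 2 + σ * k ^ 2) * (1 + k ^ 2 / 3) * k * (Real.tanh k - k / (1 + k ^ 2 / 3))
      ≤ (1 + ε ^ 2 + σ * k ^ 2) * (1 + k ^ 2 / 3) * k * (2 * k ^ 5 / 15) :=
        mul_le_mul_of_nonneg_left hd hA
    _ ≤ ε ^ 4 * (1 * (1 + σ) * ε ^ 2 * (m₁ ^ 2 + ε ^ 2 * m₂ ^ 2) ^ 3) := by
        have hR : ε ^ 4 * (1 * (1 + σ) * ε ^ 2 * (m₁ ^ 2 + ε ^ 2 * m₂ ^ 2) ^ 3)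
            = (1 + σ) * (k ^ 2) ^ 3 := by rw [hk2]; ring
        rw [hR]
        have hk2le : k ^ 2 ≤ 1 := by nlinarith
        have he2 : ε ^ 2 ≤ 1 := by nlinarith
        have h6 : (0:ℝ) ≤ k ^ 6 := by positivity
        have hfac : (1 + ε ^ 2 + σ * k ^ 2) * (1 + k ^ 2 / 3) * (2 / 15) ≤ 1 + σ := by
          nlinarith [mul_nonneg hσ (sq_nonneg k), mul_le_of_le_one_right hσ hk2le]
        nlinarith [mul_le_mul_of_nonneg_right hfac h6]
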